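/- Fix hyperparameters h and h_1, assume ν_{h_1}(θ) > 0 for μ-almost all θ ∈ Θ, let g : Θ → ℝ be measurable with ∫ |g| ℓ ν_h dμ < ∞, and define the posterior expectation I_g(h) = ∫ g ν_{h,y} dμ. Then ∫ g (ν_h/ν_{h_1}) ν_{h_1,y} dμ = (m(h)/m(h_1)) · I_g(h), and consequently ( ∫ g (ν_h/ν_{h_1}) ν_{h_1,y} dμ ) / ( ∫ (ν_h/ν_{h_1}) ν_{h_1,y} dμ ) = I_g(h). -/

import Mathlib

open MeasureTheory

/-- In the Bayesian setting with priors `ν h`, likelihood `ℓ`, marginal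
likelihood `m h = ∫ ℓ ν_h dμ ∈ (0, ∞)`, posterior `ν_{h,y} = ℓ ν_h / m h`, and posterior
expectation `I_g(h) = ∫ g ν_{h,y} dμ`:
`∫ g (ν_h/ν_{h₁}) ν_{h₁,y} dμ = (m h / m h₁) · I_g(h)`, and consequently the ratio
`(∫ g (ν_h/ν_{h₁}) ν_{h₁,y} dμ) / (∫ (ν_h/ν_{h₁}) ν_{h₁,y} dμ)` equals `I_g(h)`. -/
theorem stmt8 {Θ 𝓗 : Type*} [MeasurableSpace Θ] (μ : Measure Θ)
    (ℓ : Θ → ℝ) (hℓ_meas : Measurable ℓ) (hℓ_nonneg : ∀ θ, 0 ≤ ℓ θ)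
    (ν : 𝓗 → Θ → ℝ) (hν_meas : ∀ h, Measurable (ν h)) (hν_nonneg : ∀ h θ, 0 ≤ ν h θ)
    (h h₁ : 𝓗)
    (hint : Integrable (fun θ => ℓ θ * ν h θ) μ)
    (hint₁ : Integrable (fun θ => ℓ θ * ν h₁ θ) μ)
    (hm_pos : 0 < ∫ θ, ℓ θ * ν h θ ∂μ)
    (hm₁_pos : 0 < ∫ θ, ℓ θ * ν h₁ θ ∂μ)
    (hν₁_pos : ∀ᵐ θ ∂μ, 0 < ν h₁ θ)
    (g : Θ → ℝ) (hg_meas : Measurable g)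
    (hg_int : Integrable (fun θ => g θ * (ℓ θ * ν h θ)) μ) :
    (∫ θ, g θ * ((ν h θ / ν h₁ θ) * (ℓ θ * ν h₁ θ / (∫ θ', ℓ θ' * ν h₁ θ' ∂μ))) ∂μ
        = ((∫ θ, ℓ θ * ν h θ ∂μ) / (∫ θ, ℓ θ * ν h₁ θ ∂μ)) *
          ∫ θ, g θ * (ℓ θ * ν h θ / (∫ θ', ℓ θ' * ν h θ' ∂μ)) ∂μ) ∧
    ((∫ θ, g θ * ((ν h θ / ν h₁ θ) * (ℓ θ * ν h₁ θ / (∫ θ', ℓ θ' * ν h₁ θ' ∂μ))) ∂μ) /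
        (∫ θ, (ν h θ / ν h₁ θ) * (ℓ θ * ν h₁ θ / (∫ θ', ℓ θ' * ν h₁ θ' ∂μ)) ∂μ)
        = ∫ θ, g θ * (ℓ θ * ν h θ / (∫ θ', ℓ θ' * ν h θ' ∂μ)) ∂μ) := by
  set M := ∫ θ, ℓ θ * ν h θ ∂μ with hM
  set M₁ := ∫ θ, ℓ θ * ν h₁ θ ∂μ with hM₁
  have hM_ne : M ≠ 0 := ne_of_gt hm_pos
  have hM₁_ne : M₁ ≠ 0 := ne_of_gt hm₁_pos
  -- I_g(h) computed
  have hI : ∫ θ, g θ * (ℓ θ * ν h θ / M) ∂μ = (∫ θ, g θ * (ℓ θ * ν h θ) ∂μ) / M := by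
    simp_rw [div_eq_mul_inv, ← mul_assoc]
    rw [integral_mul_const]
  have hnum : ∫ θ, g θ * ((ν h θ / ν h₁ θ) * (ℓ θ * ν h₁ θ / M₁)) ∂μ
      = (∫ θ, g θ * (ℓ θ * ν h θ) ∂μ) / M₁ := by
    have : ∫ θ, g θ * ((ν h θ / ν h₁ θ) * (ℓ θ * ν h₁ θ / M₁)) ∂μ
        = ∫ θ, g θ * (ℓ θ * ν h θ) * M₁⁻¹ ∂μ := by
      refine integral_congr_ae ?_
      filter_upwards [hν₁_pos] with θ hθ
      field_simp
    rw [this, integral_mul_const, div_eq_mul_inv]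
  have hden : ∫ θ, (ν h θ / ν h₁ θ) * (ℓ θ * ν h₁ θ / M₁) ∂μ = M / M₁ := by
    have : ∫ θ, (ν h θ / ν h₁ θ) * (ℓ θ * ν h₁ θ / M₁) ∂μ
        = ∫ θ, ℓ θ * ν h θ * M₁⁻¹ ∂μ := by
      refine integral_congr_ae ?_
      filter_upwards [hν₁_pos] with θ hθ
      field_simp
    rw [this, integral_mul_const, ← hM, div_eq_mul_inv]
  constructor
  · rw [hnum, hI]
    field_simp
  · rw [hnum, hden, hI]
    field_simp
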